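/- Let μ be the Lebesgue measure restricted to the interval [0,1] ⊆ ℝ. Then the lower and upper quantization dimensions of order zero of μ coincide and the quantization dimension with respect to the geometric mean error satisfies D(μ) = 1. -/

import Mathlib

open MeasureTheory Filter

/-- The `n`-th geometric quantization error exponent for a measure on `ℝ`:
`ê_n(μ) = inf { ∫ log(dist(x,γ)) dμ : γ ⊆ ℝ, 1 ≤ card γ ≤ n }`. -/
noncomputable def geomQuantErrExp (μ : Measure ℝ) (n : ℕ) : ℝ :=
  sInf {e : ℝ | ∃ γ : Finset ℝ,
    γ.Nonempty ∧ γ.card ≤ n ∧ e = ∫ x, Real.log (Metric.infDist x ↑γ) ∂μ}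

/-- Lower quantization dimension of order zero. -/
noncomputable def lowerQDim (μ : Measure ℝ) : ℝ :=
  liminf (fun n : ℕ => Real.log n / (- geomQuantErrExp μ n)) atTop

/-- Upper quantization dimension of order zero. -/
noncomputable def upperQDim (μ : Measure ℝ) : ℝ :=
  limsup (fun n : ℕ => Real.log n / (- geomQuantErrExp μ n)) atTop

section Aux

open Set Topology

lemma ILog_Ioc (c : ℝ) (hc : 0 ≤ c) : IntegrableOn Real.log (Ioc 0 c) := by
  rcases eq_or_lt_of_le hc with rfl | hc
  · simp
  · have key : IntegrableOn (fun x => Real.log c - Real.log x) (Ioc 0 c) := by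
      apply intervalIntegral.integrableOn_deriv_of_nonneg
        (g := fun x => x * (Real.log c + 1) - x * Real.log x)
      · exact ((continuous_id.mul continuous_const).sub Real.continuous_mul_log).continuousOn
      · intro x hx
        have h1 : HasDerivAt (fun x : ℝ => x * (Real.log c + 1)) (Real.log c + 1) x := by
          simpa using (hasDerivAt_id x).mul_const (Real.log c + 1)
        have h2 := Real.hasDerivAt_mul_log hx.1.ne'
        exact (h1.sub h2).congr_deriv (by ring)
      · intro x hx
        have := Real.log_le_log hx.1 hx.2.le
        linarith
    have hconst : IntegrableOn (fun _ : ℝ => Real.log c) (Ioc 0 c) := by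
      exact integrableOn_const measure_Ioc_lt_top.ne
    exact (hconst.sub key).congr (MeasureTheory.ae_of_all _ fun x => by simp)

lemma ILog (a b : ℝ) : IntervalIntegrable Real.log volume a b := by
  have base : ∀ c : ℝ, IntervalIntegrable Real.log volume 0 c := by
    intro c
    rcases le_total 0 c with hc | hc
    · exact (intervalIntegrable_iff_integrableOn_Ioc_of_le hc).2 (ILog_Ioc c hc)
    · have h : IntervalIntegrable Real.log volume 0 (-c) :=
        (intervalIntegrable_iff_integrableOn_Ioc_of_le (by linarith)).2 (ILog_Ioc (-c) (by linarith))
      have h2 := (IntervalIntegrable.iff_comp_neg (by simp)).mp h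
      simp only [Real.log_neg_eq_log, neg_zero, neg_neg] at h2
      exact h2
  exact ((base a).symm).trans (base b)

lemma integrable_log_infDist (γ : Finset ℝ) (hγ : γ.Nonempty) :
    IntegrableOn (fun x => Real.log (Metric.infDist x ↑γ)) (Icc (0:ℝ) 1) := by
  have hdom : IntegrableOn (fun x => ∑ p ∈ γ, |Real.log (x - p)|) (Icc (0:ℝ) 1) := by
    apply integrable_finset_sum
    intro p _
    have h1 : IntervalIntegrable (fun x => Real.log (x - p)) volume (-p + p) ((1 - p) + p) :=
      (ILog (-p) (1 - p)).comp_sub_right p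
    have h2 : IntervalIntegrable (fun x => |Real.log (x - p)|) volume 0 1 := by
      simpa using h1.abs
    exact (intervalIntegrable_iff_integrableOn_Icc_of_le (by norm_num)).1 h2
  apply hdom.mono'
  · exact (Real.measurable_log.comp
      (Metric.continuous_infDist_pt (γ : Set ℝ)).measurable).aestronglyMeasurable
  · apply ae_of_all
    intro x
    obtain ⟨q, hq, hdq⟩ :=
      (γ.finite_toSet.isCompact).exists_infDist_eq_dist (by exact_mod_cast hγ) x
    rw [Real.norm_eq_abs, hdq, Real.dist_eq, Real.log_abs]
    exact Finset.single_le_sum (f := fun p => |Real.log (x - p)|) (fun p _ => abs_nonneg _) hq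

lemma lower_bound (n : ℕ) (hn : 1 ≤ n) (γ : Finset ℝ) (hγ : γ.Nonempty) (hcard : γ.card ≤ n) :
    -(Real.log (2*n) + 1) ≤
      ∫ x, Real.log (Metric.infDist x ↑γ) ∂(volume.restrict (Set.Icc (0:ℝ) 1)) := by
  set μ := volume.restrict (Set.Icc (0:ℝ) 1) with hμ
  have hprob : IsProbabilityMeasure μ := ⟨by simp [hμ, Real.volume_Icc]⟩
  set g : ℝ → ℝ := fun x => Real.log (Metric.infDist x ↑γ) with hgdef
  have mg : Measurable g :=
    Real.measurable_log.comp (Metric.continuous_infDist_pt (γ : Set ℝ)).measurable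
  have hg : Integrable g μ := integrable_log_infDist γ hγ
  set f : ℝ → ℝ := fun x => max (-g x) 0 with hfdef
  have mf : Measurable f := mg.neg.max measurable_const
  have hf : Integrable f μ := hg.neg.pos_part
  have hfnn : ∀ x, 0 ≤ f x := fun x => le_max_right _ _
  set a := Real.log (2*n) with hadef
  have h2n : (1:ℝ) ≤ 2*n := by
    have : (1:ℝ) ≤ (n:ℝ) := by exact_mod_cast hn
    linarith
  have ha : 0 ≤ a := Real.log_nonneg h2n
  -- lintegral bound
  have key : ∫⁻ x, ENNReal.ofReal (f x) ∂μ ≤ ENNReal.ofReal (a + 1) := by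
    rw [lintegral_eq_lintegral_meas_lt μ (ae_of_all _ hfnn) mf.aemeasurable]
    have hsub : ∀ t : ℝ, 0 < t → μ {x | t < f x} ≤ ENNReal.ofReal (2*n*Real.exp (-t)) := by
      intro t ht
      have hss : {x : ℝ | t < f x} ⊆ ⋃ p ∈ γ, Metric.ball p (Real.exp (-t)) := by
        intro x hx
        have hgx : g x < -t := by
          have h1 : t < max (-g x) 0 := hx
          have h2 : t < -g x := by
            rcases max_cases (-g x) 0 with ⟨he, _⟩ | ⟨he, hle⟩
            · rw [he] at h1; exact h1
            · rw [he] at h1; linarith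
          linarith
        have hd : Metric.infDist x ↑γ < Real.exp (-t) := by
          by_contra hcon
          push_neg at hcon
          have : Real.log (Real.exp (-t)) ≤ Real.log (Metric.infDist x ↑γ) :=
            Real.log_le_log (Real.exp_pos _) hcon
          rw [Real.log_exp] at this
          exact absurd (lt_of_le_of_lt this hgx) (lt_irrefl _)
        obtain ⟨p, hp, hdp⟩ := (Metric.infDist_lt_iff (by exact_mod_cast hγ)).1 hd
        exact Set.mem_biUnion hp hdp
      calc μ {x | t < f x} ≤ volume {x : ℝ | t < f x} := Measure.restrict_le_self _
        _ ≤ volume (⋃ p ∈ γ, Metric.ball p (Real.exp (-t))) := measure_mono hss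
        _ ≤ ∑ p ∈ γ, volume (Metric.ball p (Real.exp (-t))) :=
            measure_biUnion_finset_le γ _
        _ = ∑ p ∈ γ, ENNReal.ofReal (2*Real.exp (-t)) := by
            simp [Real.volume_ball]
        _ = γ.card * ENNReal.ofReal (2*Real.exp (-t)) := by
            rw [Finset.sum_const, nsmul_eq_mul]
        _ ≤ n * ENNReal.ofReal (2*Real.exp (-t)) := by
            gcongr <;> exact_mod_cast hcard
        _ = ENNReal.ofReal (2*n*Real.exp (-t)) := by
            rw [← ENNReal.ofReal_natCast n, ← ENNReal.ofReal_mul (by positivity)]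
            congr 1
            ring
    have hsplit : (Set.Ioi (0:ℝ)) = Set.Ioc 0 a ∪ Set.Ioi a := (Set.Ioc_union_Ioi_eq_Ioi ha).symm
    calc ∫⁻ t in Set.Ioi (0:ℝ), μ {x | t < f x}
        ≤ (∫⁻ t in Set.Ioc 0 a, μ {x | t < f x}) + ∫⁻ t in Set.Ioi a, μ {x | t < f x} := by
          rw [hsplit]
          exact lintegral_union_le (μ := volume) (fun t => μ {x | t < f x}) (Set.Ioc 0 a) (Set.Ioi a)
      _ ≤ ENNReal.ofReal a + ENNReal.ofReal 1 := by
          have hb1 : ∫⁻ t in Set.Ioc 0 a, μ {x | t < f x} ≤ ENNReal.ofReal a := by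
            calc ∫⁻ t in Set.Ioc 0 a, μ {x | t < f x} ≤ ∫⁻ _ in Set.Ioc 0 a, 1 :=
                lintegral_mono fun t => prob_le_one
              _ = ENNReal.ofReal a := by simp [Real.volume_Ioc, ha]
          have hb2 : ∫⁻ t in Set.Ioi a, μ {x | t < f x} ≤ ENNReal.ofReal 1 := by
            have hint : IntegrableOn (fun t : ℝ => 2*n*Real.exp (-t)) (Set.Ioi a) := by
              have := (exp_neg_integrableOn_Ioi a (one_pos)).const_mul (2*(n:ℝ))
              simpa [IntegrableOn] using this
            calc ∫⁻ t in Set.Ioi a, μ {x | t < f x}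
                ≤ ∫⁻ t in Set.Ioi a, ENNReal.ofReal (2*n*Real.exp (-t)) := by
                  apply setLIntegral_mono' measurableSet_Ioi
                  intro t ht
                  exact hsub t (lt_of_le_of_lt ha ht)
              _ = ENNReal.ofReal (∫ t in Set.Ioi a, 2*n*Real.exp (-t)) :=
                  (ofReal_integral_eq_lintegral_ofReal hint
                    (ae_of_all _ fun t => by positivity)).symm
              _ = ENNReal.ofReal 1 := by
                  rw [MeasureTheory.integral_const_mul, integral_exp_neg_Ioi]
                  congr 1
                  rw [hadef, Real.exp_neg, Real.exp_log (by linarith)]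
                  field_simp
          exact add_le_add hb1 hb2
      _ = ENNReal.ofReal (a + 1) := (ENNReal.ofReal_add ha zero_le_one).symm
  -- from lintegral bound to integral bound
  have hintf : ∫ x, f x ∂μ ≤ a + 1 := by
    rw [integral_eq_lintegral_of_nonneg_ae (ae_of_all _ hfnn) mf.aestronglyMeasurable]
    calc (∫⁻ x, ENNReal.ofReal (f x) ∂μ).toReal ≤ (ENNReal.ofReal (a+1)).toReal :=
        ENNReal.toReal_mono ENNReal.ofReal_ne_top key
      _ = a + 1 := ENNReal.toReal_ofReal (by linarith)
  have hmono : ∫ x, -f x ∂μ ≤ ∫ x, g x ∂μ := by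
    apply integral_mono hf.neg hg
    intro x
    simpa [Pi.neg_apply] using neg_le.mpr (le_max_left (-g x) 0)
  rw [integral_neg] at hmono
  linarith

lemma upper_bound (n : ℕ) (hn : 1 ≤ n) :
    ∃ γ : Finset ℝ, γ.Nonempty ∧ γ.card ≤ n ∧
      ∫ x, Real.log (Metric.infDist x ↑γ) ∂(volume.restrict (Set.Icc (0:ℝ) 1)) ≤
        -Real.log (2*n) := by
  set μ := volume.restrict (Set.Icc (0:ℝ) 1) with hμ
  have hprob : IsProbabilityMeasure μ := ⟨by simp [hμ, Real.volume_Icc]⟩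
  have hnpos : (0:ℝ) < n := by exact_mod_cast hn
  set γ := (Finset.range n).image (fun i : ℕ => (2*(i:ℝ)+1)/(2*n)) with hγdef
  have hne : γ.Nonempty := Finset.Nonempty.image ⟨0, Finset.mem_range.2 hn⟩ _
  refine ⟨γ, hne, le_trans (Finset.card_image_le) (by simp), ?_⟩
  ·     -- distance bound
    have hdist : ∀ x ∈ Set.Icc (0:ℝ) 1, Metric.infDist x ↑γ ≤ 1/(2*n) := by
      intro x hx
      obtain ⟨hx0, hx1⟩ := hx
      set i : ℕ := min (n-1) (Nat.floor (n*x)) with hidef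
      have hin : i < n := lt_of_le_of_lt (min_le_left _ _) (by omega)
      have hnx0 : 0 ≤ (n:ℝ)*x := by positivity
      have hbound : (i:ℝ) ≤ n*x ∧ (n:ℝ)*x ≤ i+1 := by
        rcases le_or_gt (Nat.floor ((n:ℝ)*x)) (n-1) with h | h
        · have hieq : i = Nat.floor ((n:ℝ)*x) := min_eq_right h
          constructor
          · rw [hieq]; exact Nat.floor_le hnx0
          · rw [hieq]; exact le_of_lt (Nat.lt_floor_add_one _)
        · have hieq : i = n - 1 := min_eq_left (by omega)
          have hge : (n:ℝ) ≤ (n:ℝ)*x := by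
            have : (n:ℕ) ≤ Nat.floor ((n:ℝ)*x) := by omega
            calc (n:ℝ) ≤ (Nat.floor ((n:ℝ)*x) : ℝ) := by exact_mod_cast this
              _ ≤ (n:ℝ)*x := Nat.floor_le hnx0
          have hcast : ((i:ℝ)) = (n:ℝ) - 1 := by
            rw [hieq]; push_cast [Nat.cast_sub hn]; ring
          constructor
          · rw [hcast]; linarith
          · rw [hcast]
            have : (n:ℝ)*x ≤ n := by nlinarith
            linarith
      have hmem : ((2*(i:ℝ)+1)/(2*n)) ∈ (γ : Set ℝ) := by
        rw [hγdef]
        push_cast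
        exact Set.mem_image_of_mem _ (by simpa using Finset.mem_range.2 hin)
      calc Metric.infDist x ↑γ ≤ dist x ((2*(i:ℝ)+1)/(2*n)) :=
          Metric.infDist_le_dist_of_mem hmem
        _ ≤ 1/(2*n) := by
            obtain ⟨h1, h2⟩ := hbound
            have e : x - (2*(i:ℝ)+1)/(2*n) = (2*((n:ℝ)*x) - (2*i+1))/(2*n) := by
              field_simp
            rw [Real.dist_eq, e, abs_div, abs_of_pos (show (0:ℝ) < 2*n by positivity),
              div_le_div_iff_of_pos_right (show (0:ℝ) < 2*n by positivity), abs_le]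
            constructor <;> linarith
    -- a.e. log bound
    have hae : ∀ᵐ x ∂μ, Real.log (Metric.infDist x ↑γ) ≤ -Real.log (2*n) := by
      have h1 : ∀ᵐ x ∂μ, x ∈ Set.Icc (0:ℝ) 1 := ae_restrict_mem measurableSet_Icc
      have h2 : ∀ᵐ x ∂μ, x ∉ (γ : Set ℝ) := by
        apply ae_restrict_of_ae
        have hz : volume (γ : Set ℝ) = 0 := γ.finite_toSet.measure_zero volume
        exact measure_eq_zero_iff_ae_notMem.1 hz
      filter_upwards [h1, h2] with x hx hxγ
      have hdpos : 0 < Metric.infDist x ↑γ :=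
        ((γ.finite_toSet.isClosed).notMem_iff_infDist_pos (by exact_mod_cast hne)).1 hxγ
      calc Real.log (Metric.infDist x ↑γ) ≤ Real.log (1/(2*n)) :=
          Real.log_le_log hdpos (hdist x hx)
        _ = -Real.log (2*n) := by rw [one_div, Real.log_inv]
    have hg : Integrable (fun x => Real.log (Metric.infDist x ↑γ)) μ :=
      integrable_log_infDist γ hne
    calc ∫ x, Real.log (Metric.infDist x ↑γ) ∂μ ≤ ∫ _, -Real.log (2*n) ∂μ :=
        integral_mono_ae hg (integrable_const _) hae
      _ = -Real.log (2*n) := by simp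

lemma errExp_bounds (n : ℕ) (hn : 1 ≤ n) :
    -(Real.log (2*n) + 1) ≤ geomQuantErrExp (volume.restrict (Set.Icc (0:ℝ) 1)) n ∧
    geomQuantErrExp (volume.restrict (Set.Icc (0:ℝ) 1)) n ≤ -Real.log (2*n) := by
  unfold geomQuantErrExp
  obtain ⟨γ, h1, h2, h3⟩ := upper_bound n hn
  have hmem : (∫ x, Real.log (Metric.infDist x ↑γ) ∂(volume.restrict (Set.Icc (0:ℝ) 1))) ∈
      {e : ℝ | ∃ γ : Finset ℝ, γ.Nonempty ∧ γ.card ≤ n ∧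
        e = ∫ x, Real.log (Metric.infDist x ↑γ) ∂(volume.restrict (Set.Icc (0:ℝ) 1))} :=
    ⟨γ, h1, h2, rfl⟩
  have hlb : ∀ e ∈ {e : ℝ | ∃ γ : Finset ℝ, γ.Nonempty ∧ γ.card ≤ n ∧
        e = ∫ x, Real.log (Metric.infDist x ↑γ) ∂(volume.restrict (Set.Icc (0:ℝ) 1))},
      -(Real.log (2*n) + 1) ≤ e := by
    rintro e ⟨γ', hγ1, hγ2, rfl⟩
    exact lower_bound n hn γ' hγ1 hγ2
  have hbdd : BddBelow {e : ℝ | ∃ γ : Finset ℝ, γ.Nonempty ∧ γ.card ≤ n ∧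
        e = ∫ x, Real.log (Metric.infDist x ↑γ) ∂(volume.restrict (Set.Icc (0:ℝ) 1))} :=
    ⟨-(Real.log (2*n) + 1), hlb⟩
  exact ⟨le_csInf ⟨_, hmem⟩ hlb, le_trans (csInf_le hbdd hmem) h3⟩

lemma aux_tendsto (c : ℝ) :
    Tendsto (fun n : ℕ => Real.log n / (Real.log n + c)) atTop (𝓝 1) := by
  have hlog : Tendsto (fun n : ℕ => Real.log n) atTop atTop :=
    Real.tendsto_log_atTop.comp tendsto_natCast_atTop_atTop
  have h0 : Tendsto (fun n : ℕ => c / Real.log n) atTop (𝓝 0) :=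
    Tendsto.div_atTop tendsto_const_nhds hlog
  have h1 : Tendsto (fun n : ℕ => (1 + c / Real.log n)⁻¹) atTop (𝓝 1) := by
    have := (tendsto_const_nhds.add h0).inv₀ (by norm_num : (1:ℝ) + 0 ≠ 0)
    simpa using this
  apply h1.congr'
  have hev : ∀ᶠ n : ℕ in atTop, 1 ≤ Real.log n := hlog.eventually_ge_atTop 1
  filter_upwards [hev] with n hn
  have hne : Real.log n ≠ 0 := by linarith
  have heq : 1 + c / Real.log n = (Real.log n + c) / Real.log n := by
    field_simp
  rw [heq, inv_div]

lemma ratio_tendsto :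
    Tendsto (fun n : ℕ =>
      Real.log n / (- geomQuantErrExp (volume.restrict (Set.Icc (0:ℝ) 1)) n))
      atTop (𝓝 1) := by
  have hlog : Tendsto (fun n : ℕ => Real.log n) atTop atTop :=
    Real.tendsto_log_atTop.comp tendsto_natCast_atTop_atTop
  have hlo := aux_tendsto (Real.log 2 + 1)
  have hhi := aux_tendsto (Real.log 2)
  apply tendsto_of_tendsto_of_tendsto_of_le_of_le' hlo hhi
  · filter_upwards [hlog.eventually_ge_atTop 1, eventually_ge_atTop 1] with n hln hn1
    set E := - geomQuantErrExp (volume.restrict (Set.Icc (0:ℝ) 1)) n with hE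
    obtain ⟨hb1, hb2⟩ := errExp_bounds n hn1
    have hsplit : Real.log (2*n) = Real.log 2 + Real.log n := by
      rw [Real.log_mul (by norm_num) (by exact_mod_cast Nat.one_le_iff_ne_zero.1 hn1)]
    have hE1 : Real.log n + (Real.log 2 + 1) = Real.log (2*n) + 1 := by rw [hsplit]; ring
    have hEge : E ≥ Real.log (2*n) := by rw [hE]; linarith
    have hEle : E ≤ Real.log (2*n) + 1 := by rw [hE]; linarith
    have hEpos : 0 < E := lt_of_lt_of_le (by
      rw [hsplit]
      have := Real.log_pos (by norm_num : (1:ℝ) < 2)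
      linarith) hEge
    rw [hE1]
    exact div_le_div_of_nonneg_left (by linarith) hEpos hEle
  · filter_upwards [hlog.eventually_ge_atTop 1, eventually_ge_atTop 1] with n hln hn1
    set E := - geomQuantErrExp (volume.restrict (Set.Icc (0:ℝ) 1)) n with hE
    obtain ⟨hb1, hb2⟩ := errExp_bounds n hn1
    have hsplit : Real.log (2*n) = Real.log 2 + Real.log n := by
      rw [Real.log_mul (by norm_num) (by exact_mod_cast Nat.one_le_iff_ne_zero.1 hn1)]
    have hEge : E ≥ Real.log (2*n) := by rw [hE]; linarith
    have hlpos : 0 < Real.log (2*n) := by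
      rw [hsplit]
      have := Real.log_pos (by norm_num : (1:ℝ) < 2)
      linarith
    have : Real.log n + Real.log 2 = Real.log (2*n) := by rw [hsplit]; ring
    rw [this]
    exact div_le_div_of_nonneg_left (by linarith) hlpos hEge

end Aux

/-- For Lebesgue measure restricted to `[0,1]`, the quantization dimension with respect
to the geometric mean error exists and equals `1`. -/
theorem quantization_dim_lebesgue_unit_interval :
    lowerQDim (volume.restrict (Set.Icc (0 : ℝ) 1)) =
      upperQDim (volume.restrict (Set.Icc (0 : ℝ) 1)) ∧
    lowerQDim (volume.restrict (Set.Icc (0 : ℝ) 1)) = 1 := by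
  have h := ratio_tendsto
  have h1 : lowerQDim (volume.restrict (Set.Icc (0 : ℝ) 1)) = 1 := h.liminf_eq
  have h2 : upperQDim (volume.restrict (Set.Icc (0 : ℝ) 1)) = 1 := h.limsup_eq
  exact ⟨h1.trans h2.symm, h1⟩
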